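/- Let A be an N×M₁ complex matrix and B an N×M₂ complex matrix. Then det(I_N + A A† + B B†) = det(I_{M₂} + B† B) · det(I_{M₁} + A† A − A† B (I_{M₂} + B† B)^{-1} B† A), where I_{M₂} + B† B is Hermitian positive definite, hence invertible. -/

import Mathlib

open scoped ComplexOrder Matrix

/-- For `A : N×M₁` and `B : N×M₂` complex matrices:
`det(I + AAᴴ + BBᴴ) = det(I + BᴴB) · det(I + AᴴA − AᴴB (I + BᴴB)⁻¹ BᴴA)`,
and `I + BᴴB` is Hermitian positive definite (hence invertible). -/
theorem det_sum_factorization {M₁ M₂ N : ℕ}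
    (A : Matrix (Fin N) (Fin M₁) ℂ) (B : Matrix (Fin N) (Fin M₂) ℂ) :
    ((1 : Matrix (Fin M₂) (Fin M₂) ℂ) + Bᴴ * B).PosDef ∧
    ((1 : Matrix (Fin N) (Fin N) ℂ) + A * Aᴴ + B * Bᴴ).det =
      ((1 : Matrix (Fin M₂) (Fin M₂) ℂ) + Bᴴ * B).det *
        ((1 : Matrix (Fin M₁) (Fin M₁) ℂ) + Aᴴ * A -
          Aᴴ * B * ((1 : Matrix (Fin M₂) (Fin M₂) ℂ) + Bᴴ * B)⁻¹ * (Bᴴ * A)).det := by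
  have hpos : ((1 : Matrix (Fin M₂) (Fin M₂) ℂ) + Bᴴ * B).PosDef :=
    Matrix.PosDef.add_posSemidef Matrix.PosDef.one
      (Matrix.posSemidef_conjTranspose_mul_self B)
  refine ⟨hpos, ?_⟩
  haveI : Invertible ((1 : Matrix (Fin M₂) (Fin M₂) ℂ) + Bᴴ * B) :=
    hpos.isUnit.invertible
  have h1 : (1 : Matrix (Fin N) (Fin N) ℂ) + A * Aᴴ + B * Bᴴ =
      1 + Matrix.fromCols A B * Matrix.fromRows Aᴴ Bᴴ := by
    rw [Matrix.fromCols_mul_fromRows, add_assoc]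
  rw [h1, Matrix.det_one_add_mul_comm, Matrix.fromRows_mul_fromCols]
  have h2 : (1 : Matrix (Fin M₁ ⊕ Fin M₂) (Fin M₁ ⊕ Fin M₂) ℂ) +
      Matrix.fromBlocks (Aᴴ * A) (Aᴴ * B) (Bᴴ * A) (Bᴴ * B) =
      Matrix.fromBlocks (1 + Aᴴ * A) (Aᴴ * B) (Bᴴ * A) (1 + Bᴴ * B) := by
    rw [← Matrix.fromBlocks_one, Matrix.fromBlocks_add]
    simp
  rw [h2, Matrix.det_fromBlocks₂₂, Matrix.invOf_eq_nonsing_inv]
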